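/- For every positive integer r, positive integer n, and real x, Σ_{j=0}^{r-1} 𝔅_n(x + j/r) = r^{1-n} · 𝔅_n(r x) (Raabe's multiplication theorem for Bernoulli functions). -/

import Mathlib

open Finset

/-- Bernoulli polynomial evaluated on ℝ. -/
noncomputable def bernPoly (n : ℕ) (x : ℝ) : ℝ :=
  ((Polynomial.bernoulli n).map (algebraMap ℚ ℝ)).eval x

/-- Periodic Bernoulli function 𝔅ₙ (with 𝔅₁ vanishing at integers). -/
noncomputable def pB (n : ℕ) (x : ℝ) : ℝ :=
  if n = 1 ∧ Int.fract x = 0 then 0 else bernPoly n (Int.fract x)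

/-- Euler polynomial Eₙ (via the standard Bernoulli identity). -/
noncomputable def eulerPoly (n : ℕ) (x : ℝ) : ℝ :=
  2 ^ (n + 1) / (n + 1) * (bernPoly (n + 1) ((x + 1) / 2) - bernPoly (n + 1) (x / 2))

/-- Periodic Euler function ℰₙ, with ℰₙ(x+m) = (-1)^m ℰₙ(x). -/
noncomputable def pE (n : ℕ) (x : ℝ) : ℝ :=
  (-1 : ℝ) ^ ⌊x⌋ * eulerPoly n (Int.fract x)

/-- Conjugate Dirichlet character χ̄. -/
noncomputable def conjChar {k : ℕ} (χ : DirichletCharacter ℂ k) : DirichletCharacter ℂ k :=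
  χ.ringHomComp (starRingEnd ℂ)

/-- Generalized Bernoulli function 𝔅_{m,χ}(x) = k^{m-1} Σ_{j=0}^{k-1} χ̄(j) 𝔅_m((j+x)/k). -/
noncomputable def genB {k : ℕ} (χ : DirichletCharacter ℂ k) (m : ℕ) (x : ℝ) : ℂ :=
  (k : ℂ) ^ ((m : ℤ) - 1) *
    ∑ j ∈ Finset.range k, conjChar χ j * ((pB m ((j + x) / k) : ℝ) : ℂ)

/-- Character Euler function ℰ_{m,χ}(x) = k^m Σ_{j=0}^{k-1} (-1)^j χ̄(j) ℰ_m((j+x)/k). -/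
noncomputable def genE {k : ℕ} (χ : DirichletCharacter ℂ k) (m : ℕ) (x : ℝ) : ℂ :=
  (k : ℂ) ^ m *
    ∑ j ∈ Finset.range k, (-1 : ℂ) ^ j * conjChar χ j * ((pE m ((j + x) / k) : ℝ) : ℂ)

/-- Character Hardy–Berndt sum s_{1,p}(d,c:χ). -/
noncomputable def s1p {k : ℕ} (χ : DirichletCharacter ℂ k) (p d c : ℕ) : ℂ :=
  ∑ n ∈ Finset.Icc 1 (c * k),
    χ n * genE χ (p - 1) ((d : ℝ) * n / c) * ((pB 1 ((n : ℝ) / ((c : ℝ) * k)) : ℝ) : ℂ)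

/-- Character Hardy–Berndt sum s_{2,p}(d,c:χ). -/
noncomputable def s2p {k : ℕ} (χ : DirichletCharacter ℂ k) (p d c : ℕ) : ℂ :=
  ∑ n ∈ Finset.Icc 1 (c * k),
    (-1 : ℂ) ^ n * χ n * genB χ p ((d : ℝ) * n / c) * ((pB 1 ((n : ℝ) / ((c : ℝ) * k)) : ℝ) : ℂ)

/-- Character Hardy–Berndt sum s_{5,p}(d,c:χ). -/
noncomputable def s5p {k : ℕ} (χ : DirichletCharacter ℂ k) (p d c : ℕ) : ℂ :=
  ∑ n ∈ Finset.Icc 1 (c * k),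
    (-1 : ℂ) ^ n * χ n * genE χ (p - 1) ((d : ℝ) * n / c) * ((pB 1 ((n : ℝ) / ((c : ℝ) * k)) : ℝ) : ℂ)

section RaabeAux
open Polynomial


noncomputable def raabeP (r n : ℕ) : ℚ[X] :=
  ∑ j ∈ range r, (Polynomial.bernoulli n).comp (X + C ((j:ℚ)/r))

noncomputable def raabeR (r n : ℕ) : ℚ[X] := (Polynomial.bernoulli n).comp (C (r:ℚ) * X)

lemma derivP (r n : ℕ) : derivative (raabeP r (n+1)) = (n+1 : ℚ[X]) * raabeP r n := by
  simp only [raabeP, derivative_sum, derivative_comp, derivative_add, derivative_X, derivative_C,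
    Polynomial.derivative_bernoulli_add_one, add_zero, one_mul, mul_comp, add_comp, one_comp, natCast_comp, Finset.mul_sum]

lemma derivR (r n : ℕ) : derivative (raabeR r (n+1)) = (n+1 : ℚ[X]) * C (r:ℚ) * raabeR r n := by
  simp only [raabeR, derivative_comp, derivative_mul, derivative_C, derivative_X,
    Polynomial.derivative_bernoulli_add_one, zero_mul, mul_one, zero_add, mul_comp, add_comp, one_comp, natCast_comp]
  ring

lemma evalP (r m : ℕ) :
    (raabeP r (m+1)).eval 1 - (raabeP r (m+1)).eval 0 =
      (m+1 : ℚ) * ∑ j ∈ range r, ((j:ℚ)/r) ^ m := by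
  simp only [raabeP, eval_finset_sum, eval_comp, eval_add, eval_X, eval_C, zero_add]
  rw [← Finset.sum_sub_distrib, Finset.mul_sum]
  refine Finset.sum_congr rfl fun j _ => ?_
  rw [Polynomial.bernoulli_eval_one_add]
  push_cast [Nat.add_sub_cancel]
  ring

lemma evalR (r m : ℕ) :
    (raabeR r (m+1)).eval 1 - (raabeR r (m+1)).eval 0 = (m+1 : ℚ) * ∑ j ∈ range r, (j:ℚ) ^ m := by
  simp only [raabeR, eval_comp, eval_mul, eval_C, eval_X, mul_one, mul_zero]
  rw [show ((0:ℚ)) = ((0:ℕ):ℚ) by norm_num, Polynomial.bernoulli_succ_eval,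
    Polynomial.bernoulli_succ_eval]
  push_cast
  simp

lemma raabe_poly (r : ℕ) (hr : 0 < r) : ∀ n, C ((r:ℚ)^n) * raabeP r n = C (r:ℚ) * raabeR r n := by
  intro n
  induction n with
  | zero =>
    simp [raabeP, raabeR, Polynomial.bernoulli_zero, Finset.sum_const]
  | succ n ih =>
    have hrne : (r:ℚ) ≠ 0 := by positivity
    set D : ℚ[X] := C ((r:ℚ)^(n+1)) * raabeP r (n+1) - C (r:ℚ) * raabeR r (n+1) with hD
    have hd : derivative D = 0 := by
      rw [hD, derivative_sub, derivative_mul, derivative_mul, derivative_C, derivative_C,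
        derivP, derivR, zero_mul, zero_mul, zero_add, zero_add,
        show ((r:ℚ)^(n+1)) = (r:ℚ)^n * r from pow_succ _ _, C_mul]
      linear_combination (((n : ℚ[X]) + 1) * C (r:ℚ)) * ih
    have hDC : D = C (D.coeff 0) := eq_C_of_derivative_eq_zero hd
    set c : ℚ := D.coeff 0 with hc
    set D2 : ℚ[X] := C ((r:ℚ)^(n+2)) * raabeP r (n+2) - C (r:ℚ) * raabeR r (n+2) with hD2
    have h2 : C ((r:ℚ)^(n+1)) * raabeP r (n+1) = C c + C (r:ℚ) * raabeR r (n+1) :=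
      sub_eq_iff_eq_add.mp (hD ▸ hDC)
    have hd2 : derivative D2 = ((n : ℚ[X]) + 2) * C (r:ℚ) * C c := by
      rw [hD2, derivative_sub, derivative_mul, derivative_mul, derivative_C, derivative_C,
        derivP, derivR, zero_mul, zero_mul, zero_add, zero_add,
        show ((r:ℚ)^(n+2)) = (r:ℚ)^(n+1) * r from pow_succ _ _, C_mul]
      push_cast
      linear_combination (((n : ℚ[X]) + 2) * C (r:ℚ)) * h2
    have hder : derivative (D2 - ((n : ℚ[X]) + 2) * C (r:ℚ) * C c * X) = 0 := by
      rw [derivative_sub, hd2]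
      simp
    have h := eq_C_of_derivative_eq_zero hder
    have hev : D2.eval 1 - D2.eval 0 = ((n:ℚ)+2) * r * c := by
      have e1 := congrArg (eval 1) h
      have e0 := congrArg (eval 0) h
      simp only [eval_sub, eval_mul, eval_add, eval_C, eval_X, eval_natCast, eval_ofNat,
        mul_one, mul_zero, sub_zero] at e1 e0
      linarith [e1, e0]
    have hev2 : D2.eval 1 - D2.eval 0 = 0 := by
      rw [hD2]
      simp only [eval_sub, eval_mul, eval_C]
      have e1 := evalP r (n+1)
      have e2 := evalR r (n+1)
      have key : (r:ℚ)^(n+2) * (((n:ℚ)+1+1) * ∑ j ∈ range r, ((j:ℚ)/r)^(n+1))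
          = (r:ℚ) * (((n:ℚ)+1+1) * ∑ j ∈ range r, (j:ℚ)^(n+1)) := by
        rw [Finset.mul_sum, Finset.mul_sum, Finset.mul_sum, Finset.mul_sum]
        refine Finset.sum_congr rfl fun j _ => ?_
        rw [div_pow]
        field_simp
        ring
      push_cast at e1 e2
      linear_combination ((r:ℚ))^(n+2) * e1 - (r:ℚ) * e2 + key
    have hc0 : c = 0 := by
      have h0 : ((n:ℚ)+2) * r * c = 0 := by rw [← hev, hev2]
      rcases mul_eq_zero.mp h0 with h | h
      · exact absurd h (by positivity)
      · exact h
    have hz : D = 0 := by rw [hDC, hc0, map_zero]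
    exact sub_eq_zero.mp (hD ▸ hz)

lemma raabe_bern (r n : ℕ) (hr : 0 < r) (x : ℝ) :
    ∑ j ∈ range r, bernPoly n (x + j / r) = (r:ℝ) ^ ((1:ℤ) - n) * bernPoly n (r * x) := by
  have hrne : (r:ℝ) ≠ 0 := by positivity
  have hb : ∀ y : ℝ, (Polynomial.aeval y) (Polynomial.bernoulli n) = bernPoly n y := fun y => by
    rw [bernPoly, Polynomial.eval_map, Polynomial.aeval_def]
  have h := congrArg (Polynomial.aeval (x : ℝ)) (raabe_poly r hr n)
  simp only [map_mul, aeval_C, raabeP, raabeR, map_sum, Polynomial.aeval_comp, map_add, aeval_X,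
    aeval_C, map_pow, hb] at h
  have hcast : ∀ j : ℕ, (algebraMap ℚ ℝ) ((j:ℚ) / r) = (j:ℝ) / r := by
    intro j; push_cast [Rat.cast_def]; norm_num
  have hcast2 : (algebraMap ℚ ℝ) ((r:ℚ)) = (r:ℝ) := by push_cast; norm_num
  rw [hcast2] at h
  simp only [hcast] at h
  rw [zpow_sub₀ hrne, zpow_one, zpow_natCast, div_mul_eq_mul_div,
    eq_div_iff (pow_ne_zero _ hrne)]
  linear_combination h

lemma pB_add_int (n : ℕ) (x : ℝ) (k : ℤ) : pB n (x + k) = pB n x := by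
  simp [pB, Int.fract_add_intCast]

lemma pB_add_nat (n : ℕ) (x : ℝ) (k : ℕ) : pB n (x + k) = pB n x := by
  have := pB_add_int n x (k : ℤ)
  push_cast at this
  exact this

end RaabeAux

open Fin.NatCast

theorem stmt1 (r n : ℕ) (hr : 0 < r) (hn : 0 < n) (x : ℝ) :
    ∑ j ∈ Finset.range r, pB n (x + j / r) = (r : ℝ) ^ ((1 : ℤ) - n) * pB n (r * x) := by
  have hrne : (r:ℝ) ≠ 0 := by positivity
  have hr1 : (1:ℝ) ≤ r := by exact_mod_cast hr
  -- reduce to y := fract x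
  obtain ⟨y, hy0, hy1, hred1, hred2⟩ :
      ∃ y : ℝ, 0 ≤ y ∧ y < 1 ∧ (∀ j : ℕ, pB n (x + j / r) = pB n (y + j / r)) ∧
        pB n (r * x) = pB n (r * y) := by
    refine ⟨Int.fract x, Int.fract_nonneg x, Int.fract_lt_one x, fun j => ?_, ?_⟩
    · have hxe : x + (j:ℝ) / r = (Int.fract x + j / r) + (⌊x⌋ : ℤ) := by
        rw [Int.fract]; push_cast; ring
      rw [hxe, pB_add_int]
    · have hxe : (r:ℝ) * x = (r * Int.fract x) + ((r * ⌊x⌋ : ℤ) : ℤ) := by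
        rw [Int.fract]; push_cast; ring
      rw [hxe, pB_add_int]
  simp only [hred1, hred2]
  clear hred1 hred2
  -- set u and m
  set u := Int.fract ((r:ℝ) * y) with hu
  have hu0 : 0 ≤ u := Int.fract_nonneg _
  have hu1 : u < 1 := Int.fract_lt_one _
  have hfl0 : 0 ≤ ⌊(r:ℝ) * y⌋ := Int.floor_nonneg.mpr (by positivity)
  have hflr : ⌊(r:ℝ) * y⌋ < (r:ℤ) := by
    apply Int.floor_lt.mpr
    push_cast
    nlinarith
  set m := (⌊(r:ℝ) * y⌋).toNat with hm
  have hmr : m < r := by omega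
  have hmc : (m : ℝ) = (⌊(r:ℝ) * y⌋ : ℝ) := by
    rw [hm]
    exact_mod_cast congrArg (Int.cast : ℤ → ℝ) (Int.toNat_of_nonneg hfl0)
  have hry : (r:ℝ) * y = u + m := by
    rw [hu, Int.fract, hmc]; ring
  -- Step A: shift each term into [0,1)
  have stepA : ∀ j : ℕ, pB n (y + j / r) = pB n ((u + ((m + j) % r : ℕ)) / r) := by
    intro j
    have hdm : (m + j : ℕ) = r * ((m + j) / r) + (m + j) % r := (Nat.div_add_mod _ _).symm
    have hdm' : (m:ℝ) + j = r * (((m + j) / r : ℕ) : ℝ) + (((m + j) % r : ℕ) : ℝ) := by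
      exact_mod_cast congrArg (Nat.cast : ℕ → ℝ) hdm
    have hsplit : y + (j:ℝ) / r = (u + ((m + j) % r : ℕ)) / r + (((m + j) / r : ℕ) : ℝ) := by
      field_simp
      linarith [hry, hdm']
    rw [hsplit, pB_add_nat]
  simp only [stepA]
  -- Step B: reindex
  have stepB : ∑ j ∈ range r, pB n ((u + ((m + j) % r : ℕ)) / r)
      = ∑ j ∈ range r, pB n ((u + j) / r) := by
    haveI : NeZero r := ⟨hr.ne'⟩
    rw [← Fin.sum_univ_eq_sum_range (fun j => pB n ((u + ((m + j) % r : ℕ)) / r)) r,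
        ← Fin.sum_univ_eq_sum_range (fun j => pB n ((u + (j:ℕ)) / r)) r]
    have hval : ∀ j : Fin r, ((m : Fin r) + j).val = (m + j.val) % r := by
      intro j
      simp [Fin.add_def, Fin.val_natCast, Nat.mod_add_mod]
    calc ∑ j : Fin r, pB n ((u + ((m + (j:ℕ)) % r : ℕ)) / r)
        = ∑ j : Fin r, pB n ((u + (((m : Fin r) + j) : Fin r).val) / r) := by
          refine Finset.sum_congr rfl fun j _ => ?_
          rw [hval j]
      _ = ∑ j : Fin r, pB n ((u + (j:ℕ)) / r) :=
          Equiv.sum_comp (Equiv.addLeft (m : Fin r)) (fun j : Fin r => pB n ((u + (j:ℕ)) / r))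
  rw [stepB]
  have hfr : ∀ j : ℕ, j < r → Int.fract ((u + (j:ℝ)) / r) = (u + j) / r := by
    intro j hj
    refine Int.fract_eq_self.mpr ⟨by positivity, ?_⟩
    rw [div_lt_one (by positivity)]
    have hjr : (j:ℝ) + 1 ≤ r := by exact_mod_cast hj
    linarith
  have hRHS : pB n ((r:ℝ) * y) = if n = 1 ∧ u = 0 then 0 else bernPoly n u := by
    rw [pB, ← hu]
  by_cases hcase : n = 1 ∧ u = 0
  · obtain ⟨hn1, hu00⟩ := hcase
    subst hn1
    rw [hRHS, if_pos ⟨rfl, hu00⟩, mul_zero]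
    have hterm : ∀ j ∈ range r, pB 1 ((u + (j:ℝ)) / r)
        = if j = 0 then 0 else bernPoly 1 ((0:ℝ) + (j:ℝ) / r) := by
      intro j hj
      rw [pB, hfr j (mem_range.mp hj)]
      by_cases hj0 : j = 0
      · subst hj0
        rw [if_pos ⟨rfl, by rw [hu00]; norm_num⟩, if_pos rfl]
      · rw [if_neg, if_neg hj0]
        · congr 1
          rw [hu00]
          ring
        · rintro ⟨-, h2⟩
          apply hj0
          have hj1 : (1:ℝ) ≤ j := by exact_mod_cast Nat.one_le_iff_ne_zero.mpr hj0
          have : (0:ℝ) < (u + j) / r := by positivity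
          linarith [h2 ▸ this]
    rw [Finset.sum_congr rfl hterm]
    have h0mem : (0:ℕ) ∈ range r := mem_range.mpr hr
    set g : ℕ → ℝ := fun j => bernPoly 1 ((0:ℝ) + (j:ℝ) / r) with hg
    have hsplit : ∑ j ∈ range r, (if j = 0 then 0 else g j) = ∑ j ∈ range r, g j - g 0 := by
      rw [← Finset.sum_erase_add (range r) (fun j => if j = 0 then (0:ℝ) else g j) h0mem,
          ← Finset.sum_erase_add (range r) g h0mem]
      have he : ∑ j ∈ (range r).erase 0, (if j = 0 then (0:ℝ) else g j)
          = ∑ j ∈ (range r).erase 0, g j :=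
        Finset.sum_congr rfl fun j hj => if_neg (Finset.ne_of_mem_erase hj)
      rw [he]
      simp
    rw [hsplit, hg]
    rw [raabe_bern r 1 hr 0]
    norm_num
  · have hterm : ∀ j ∈ range r, pB n ((u + (j:ℝ)) / r) = bernPoly n (u / r + (j:ℝ) / r) := by
      intro j hj
      rw [pB, hfr j (mem_range.mp hj), if_neg]
      · congr 1
        rw [← add_div]
      · rintro ⟨h1, h2⟩
        apply hcase
        refine ⟨h1, ?_⟩
        have hj0 : (0:ℝ) ≤ (j:ℝ) := by positivity
        have : u + (j:ℝ) = 0 := by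
          rcases div_eq_zero_iff.mp h2 with h | h
          · exact h
          · exact absurd h hrne
        linarith
    rw [Finset.sum_congr rfl hterm, raabe_bern r n hr (u / r),
      show (r:ℝ) * (u / r) = u by field_simp, hRHS, if_neg hcase]
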